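/- For every real α with 0 ≤ α ≤ 2, the supremum of E|X-Y|^α over all coherent pairs (X,Y) equals 2^{-α}, and the same supremum restricted to coherent pairs with X independent of Y also equals 2^{-α}. In particular, every coherent pair satisfies E|X-Y|^α ≤ 2^{-α}. -/

import Mathlib

open MeasureTheory ProbabilityTheory

/-- A pair of random variables `(X, Y)` on a probability space is *coherent* if there are an
event `A` and sub-σ-algebras `G`, `H` such that `X = E[1_A | G]` and `Y = E[1_A | H]` a.s. -/
def IsCoherentPair {Ω : Type} [m0 : MeasurableSpace Ω] (μ : Measure Ω) (X Y : Ω → ℝ) : Prop :=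
  ∃ (A : Set Ω) (G H : MeasurableSpace Ω),
    MeasurableSet A ∧ G ≤ m0 ∧ H ≤ m0 ∧
    X =ᵐ[μ] μ[A.indicator (fun _ => (1 : ℝ)) | G] ∧
    Y =ᵐ[μ] μ[A.indicator (fun _ => (1 : ℝ)) | H]

lemma integrable_of_bdd' {Ω : Type} [MeasurableSpace Ω] {μ : Measure Ω} [IsFiniteMeasure μ]
    {f : Ω → ℝ} (hf : AEStronglyMeasurable f μ) (C : ℝ) (h : ∀ᵐ ω ∂μ, |f ω| ≤ C) :
    Integrable f μ :=
  memLp_one_iff_integrable.mp (MemLp.of_bound hf C (by simpa [Real.norm_eq_abs] using h))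

/-- Key structural facts for a coherent pair. -/
lemma coherent_facts {Ω : Type} [m0 : MeasurableSpace Ω] (μ : Measure Ω)
    [IsProbabilityMeasure μ] (X Y : Ω → ℝ) (h : IsCoherentPair μ X Y) :
    AEStronglyMeasurable X μ ∧ AEStronglyMeasurable Y μ ∧
    (∀ᵐ ω ∂μ, 0 ≤ X ω ∧ X ω ≤ 1) ∧ (∀ᵐ ω ∂μ, 0 ≤ Y ω ∧ Y ω ≤ 1) ∧
    ∫ ω, (X ω - Y ω) ^ 2 ∂μ ≤ 1 / 4 := by
  obtain ⟨A, G, H, hA, hG, hH, hX, hY⟩ := h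
  have hA0 : MeasurableSet[m0] A := hH A hA
  set Z : Ω → ℝ := A.indicator (fun _ => (1 : ℝ)) with hZdef
  haveI : IsFiniteMeasure (μ.trim hG) := isFiniteMeasure_trim hG
  haveI : IsFiniteMeasure (μ.trim hH) := isFiniteMeasure_trim hH
  have hZsm : StronglyMeasurable[m0] Z := stronglyMeasurable_const.indicator hA0
  have hZint : Integrable Z μ := (integrable_const (1 : ℝ)).indicator hA0
  have hZ01 : ∀ ω, Z ω = 0 ∨ Z ω = 1 := by
    intro ω; by_cases hω : ω ∈ A <;> simp [hZdef, Set.indicator_apply, hω]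
  have hZ0 : ∀ ω, 0 ≤ Z ω := fun ω => by rcases hZ01 ω with h' | h' <;> simp [h']
  have hZ1 : ∀ ω, Z ω ≤ 1 := fun ω => by rcases hZ01 ω with h' | h' <;> simp [h']
  set X' : Ω → ℝ := μ[Z|G] with hX'def
  set Y' : Ω → ℝ := μ[Z|H] with hY'def
  have hX'sm : StronglyMeasurable[m0] X' := (stronglyMeasurable_condExp (m := G)).mono hG
  have hY'sm : StronglyMeasurable[m0] Y' := (stronglyMeasurable_condExp (m := H)).mono hH
  have hX'int : Integrable X' μ := integrable_condExp
  have hY'int : Integrable Y' μ := integrable_condExp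
  have hX'0 : 0 ≤ᵐ[μ] X' := condExp_nonneg (ae_of_all μ hZ0)
  have hY'0 : 0 ≤ᵐ[μ] Y' := condExp_nonneg (ae_of_all μ hZ0)
  have hX'1 : X' ≤ᵐ[μ] 1 := by
    have h1 : μ[Z|G] ≤ᵐ[μ] μ[(fun _ => (1:ℝ))|G] :=
      condExp_mono hZint (integrable_const 1) (ae_of_all μ hZ1)
    rwa [condExp_const hG] at h1
  have hY'1 : Y' ≤ᵐ[μ] 1 := by
    have h1 : μ[Z|H] ≤ᵐ[μ] μ[(fun _ => (1:ℝ))|H] :=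
      condExp_mono hZint (integrable_const 1) (ae_of_all μ hZ1)
    rwa [condExp_const hH] at h1
  -- bounds on X and Y
  have hXb : ∀ᵐ ω ∂μ, 0 ≤ X ω ∧ X ω ≤ 1 := by
    filter_upwards [hX, hX'0, hX'1] with ω h1 h2 h3
    exact ⟨h1 ▸ h2, h1 ▸ h3⟩
  have hYb : ∀ᵐ ω ∂μ, 0 ≤ Y ω ∧ Y ω ≤ 1 := by
    filter_upwards [hY, hY'0, hY'1] with ω h1 h2 h3
    exact ⟨h1 ▸ h2, h1 ▸ h3⟩
  refine ⟨hX'sm.aestronglyMeasurable.congr hX.symm, hY'sm.aestronglyMeasurable.congr hY.symm,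
    hXb, hYb, ?_⟩
  -- the L² bound
  have habX : ∀ᵐ ω ∂μ, |X' ω| ≤ 1 := by
    filter_upwards [hX'0, hX'1] with ω h1 h2
    exact abs_le.mpr ⟨by linarith [show (0:ℝ) ≤ X' ω from h1], h2⟩
  have habY : ∀ᵐ ω ∂μ, |Y' ω| ≤ 1 := by
    filter_upwards [hY'0, hY'1] with ω h1 h2
    exact abs_le.mpr ⟨by linarith [show (0:ℝ) ≤ Y' ω from h1], h2⟩
  have habZ : ∀ᵐ ω ∂μ, |Z ω| ≤ 1 := ae_of_all μ fun ω =>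
    abs_le.mpr ⟨by linarith [hZ0 ω], hZ1 ω⟩
  have key : ∀ f g : Ω → ℝ, StronglyMeasurable[m0] f → StronglyMeasurable[m0] g →
      (∀ᵐ ω ∂μ, |f ω| ≤ 1) → (∀ᵐ ω ∂μ, |g ω| ≤ 1) → Integrable (f * g) μ := by
    intro f g hf hg hbf hbg
    refine @integrable_of_bdd' Ω m0 μ _ (f * g) (hf.mul hg).aestronglyMeasurable 1 ?_
    filter_upwards [hbf, hbg] with ω h1 h2
    calc |(f * g) ω| = |f ω| * |g ω| := abs_mul _ _
      _ ≤ 1 * 1 := mul_le_mul h1 h2 (abs_nonneg _) zero_le_one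
      _ = 1 := one_mul 1
  have iXX := key X' X' hX'sm hX'sm habX habX
  have iYY := key Y' Y' hY'sm hY'sm habY habY
  have iXZ := key X' Z hX'sm hZsm habX habZ
  have iYZ := key Y' Z hY'sm hZsm habY habZ
  have iZZ := key Z Z hZsm hZsm habZ habZ
  -- E[X'Z] = E[X'X']
  have h1 : ∫ ω, (X' * Z) ω ∂μ = ∫ ω, (X' * X') ω ∂μ := by
    have hmul : μ[X' * Z|G] =ᵐ[μ] X' * μ[Z|G] :=
      condExp_mul_of_stronglyMeasurable_left (stronglyMeasurable_condExp (m := G) (m₀ := m0)) iXZ hZint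
    calc ∫ ω, (X' * Z) ω ∂μ = ∫ ω, (μ[X' * Z|G]) ω ∂μ := (integral_condExp hG).symm
      _ = ∫ ω, (X' * μ[Z|G]) ω ∂μ := integral_congr_ae hmul
      _ = ∫ ω, (X' * X') ω ∂μ := rfl
  have h2 : ∫ ω, (Y' * Z) ω ∂μ = ∫ ω, (Y' * Y') ω ∂μ := by
    have hmul : μ[Y' * Z|H] =ᵐ[μ] Y' * μ[Z|H] :=
      condExp_mul_of_stronglyMeasurable_left (stronglyMeasurable_condExp (m := H) (m₀ := m0)) iYZ hZint
    calc ∫ ω, (Y' * Z) ω ∂μ = ∫ ω, (μ[Y' * Z|H]) ω ∂μ := (integral_condExp hH).symm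
      _ = ∫ ω, (Y' * μ[Z|H]) ω ∂μ := integral_congr_ae hmul
      _ = ∫ ω, (Y' * Y') ω ∂μ := rfl
  have hEX : ∫ ω, X' ω ∂μ = ∫ ω, Z ω ∂μ := integral_condExp hG
  have hEY : ∫ ω, Y' ω ∂μ = ∫ ω, Z ω ∂μ := integral_condExp hH
  have hZZ : ∫ ω, (Z * Z) ω ∂μ = ∫ ω, Z ω ∂μ := by
    refine integral_congr_ae (ae_of_all μ fun ω => ?_)
    rcases hZ01 ω with h' | h' <;> simp [h']
  set W : Ω → ℝ := fun ω => X' ω + Y' ω - Z ω with hWdef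
  have hWsm : StronglyMeasurable[m0] W := (hX'sm.add hY'sm).sub hZsm
  have hWmem : MemLp W 2 μ := by
    refine MemLp.of_bound hWsm.aestronglyMeasurable 3 ?_
    filter_upwards [habX, habY] with ω hx hy
    obtain ⟨hx1, hx2⟩ := abs_le.mp hx
    obtain ⟨hy1, hy2⟩ := abs_le.mp hy
    have hz1 := hZ0 ω
    have hz2 := hZ1 ω
    rw [Real.norm_eq_abs]
    exact abs_le.mpr ⟨by simp only [hWdef]; linarith, by simp only [hWdef]; linarith⟩
  have hvar : (∫ ω, W ω ∂μ) ^ 2 ≤ ∫ ω, W ω ^ 2 ∂μ := by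
    have hv := variance_nonneg W μ
    rw [variance_eq_sub hWmem] at hv
    simp only [Pi.pow_apply] at hv
    linarith
  have hEW : ∫ ω, W ω ∂μ = ∫ ω, Z ω ∂μ := by
    rw [hWdef]
    rw [integral_sub (f := fun ω => X' ω + Y' ω) (g := Z) (hX'int.add hY'int) hZint,
      integral_add hX'int hY'int, hEX, hEY]
    ring
  have iW2 : Integrable (fun ω => W ω ^ 2) μ := hWmem.integrable_sq
  have hpt : (fun ω => (X' ω - Y' ω) ^ 2) =
      fun ω => (2 * ((X' * X') ω - (X' * Z) ω) + 2 * ((Y' * Y') ω - (Y' * Z) ω) + (Z * Z) ω)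
        - W ω ^ 2 := by
    funext ω
    simp only [Pi.mul_apply, hWdef]
    ring
  have ibig : Integrable (fun ω =>
      2 * ((X' * X') ω - (X' * Z) ω) + 2 * ((Y' * Y') ω - (Y' * Z) ω) + (Z * Z) ω) μ :=
    (((iXX.sub iXZ).const_mul 2).add ((iYY.sub iYZ).const_mul 2)).add iZZ
  have hbig : ∫ ω, (2 * ((X' * X') ω - (X' * Z) ω) + 2 * ((Y' * Y') ω - (Y' * Z) ω)
      + (Z * Z) ω) ∂μ = ∫ ω, Z ω ∂μ := by
    rw [integral_add (f := fun ω => 2 * ((X' * X') ω - (X' * Z) ω) + 2 * ((Y' * Y') ω - (Y' * Z) ω))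
        (g := Z * Z) (((iXX.sub iXZ).const_mul 2).add ((iYY.sub iYZ).const_mul 2)) iZZ,
      integral_add (f := fun ω => 2 * ((X' * X') ω - (X' * Z) ω))
        (g := fun ω => 2 * ((Y' * Y') ω - (Y' * Z) ω))
        ((iXX.sub iXZ).const_mul 2) ((iYY.sub iYZ).const_mul 2),
      integral_const_mul, integral_const_mul,
      integral_sub (f := X' * X') (g := X' * Z) iXX iXZ,
      integral_sub (f := Y' * Y') (g := Y' * Z) iYY iYZ,
      h1, h2, hZZ]
    ring
  have hXY2 : ∫ ω, (X ω - Y ω) ^ 2 ∂μ = ∫ ω, (X' ω - Y' ω) ^ 2 ∂μ := by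
    refine integral_congr_ae ?_
    filter_upwards [hX, hY] with ω e1 e2
    rw [e1, e2]
  set p : ℝ := ∫ ω, Z ω ∂μ with hpdef
  have hp0 : 0 ≤ p := integral_nonneg hZ0
  have hp1 : p ≤ 1 := by
    have := integral_mono hZint (integrable_const (1:ℝ)) hZ1
    simpa using this
  have hfinal : ∫ ω, (X' ω - Y' ω) ^ 2 ∂μ = p - ∫ ω, W ω ^ 2 ∂μ := by
    rw [hpt, integral_sub ibig iW2, hbig]
  rw [hEW] at hvar
  rw [hXY2, hfinal]
  nlinarith [hvar, sq_nonneg (2 * p - 1)]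

lemma rpow_neg_two_eq : ∀ α : ℝ, ((1:ℝ)/4) ^ (α/2) = (2:ℝ) ^ (-α) := by
  intro α
  have h4 : ((1:ℝ)/4) = (2:ℝ) ^ (-2:ℝ) := by
    rw [show (-2:ℝ) = ((-2:ℤ):ℝ) by norm_num, Real.rpow_intCast]
    norm_num
  rw [h4, ← Real.rpow_mul (by norm_num : (0:ℝ) ≤ 2)]
  norm_num
  ring_nf

lemma coherent_rpow_le {Ω : Type} [m0 : MeasurableSpace Ω] (μ : Measure Ω)
    [IsProbabilityMeasure μ] (X Y : Ω → ℝ) (h : IsCoherentPair μ X Y)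
    (α : ℝ) (hα0 : 0 ≤ α) (hα2 : α ≤ 2) :
    ∫ ω, |X ω - Y ω| ^ α ∂μ ≤ (2:ℝ) ^ (-α) := by
  obtain ⟨hXm, hYm, hXb, hYb, hsq⟩ := coherent_facts μ X Y h
  set g : Ω → ℝ := fun ω => |X ω - Y ω| with hgdef
  have hgm : AEStronglyMeasurable g μ := (hXm.sub hYm).norm.congr
    (ae_of_all μ fun ω => by simp [hgdef, Real.norm_eq_abs])
  have hg0 : ∀ ω, 0 ≤ g ω := fun ω => abs_nonneg _
  have hg1 : ∀ᵐ ω ∂μ, g ω ≤ 1 := by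
    filter_upwards [hXb, hYb] with ω h1 h2
    exact abs_le.mpr ⟨by linarith [h1.1, h1.2, h2.1, h2.2], by linarith [h1.1, h1.2, h2.1, h2.2]⟩
  have hgsq : ∫ ω, g ω ^ (2:ℕ) ∂μ ≤ 1/4 := by
    have : ∀ ω, g ω ^ (2:ℕ) = (X ω - Y ω) ^ 2 := fun ω => sq_abs _
    simpa only [this] using hsq
  rcases eq_or_lt_of_le hα0 with hα0' | hα0'
  · -- α = 0
    rw [← hα0']
    simp only [Real.rpow_zero]
    rw [integral_const, neg_zero, Real.rpow_zero]
    simp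
  rcases eq_or_lt_of_le hα2 with hα2' | hα2'
  · -- α = 2
    subst hα2'
    have : ∀ ω, |X ω - Y ω| ^ (2:ℝ) = g ω ^ (2:ℕ) := fun ω => by
      rw [show ((2:ℝ) = ((2:ℕ):ℝ)) by norm_num, Real.rpow_natCast]
    calc ∫ ω, |X ω - Y ω| ^ (2:ℝ) ∂μ = ∫ ω, g ω ^ (2:ℕ) ∂μ := by simp only [this]
      _ ≤ 1/4 := hgsq
      _ = (2:ℝ) ^ (-2:ℝ) := by
          rw [show (-2:ℝ) = ((-2:ℤ):ℝ) by norm_num, Real.rpow_intCast]; norm_num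
  · -- 0 < α < 2 : Hölder
    set q : ℝ := 2 / (2 - α) with hqdef
    have hpq : Real.HolderConjugate (2/α) q := by
      refine Real.holderConjugate_iff.mpr ⟨?_, ?_⟩
      · rw [lt_div_iff₀ hα0']; linarith
      · rw [hqdef]
        field_simp
        ring
    have hfmem : MemLp (fun ω => g ω ^ α) (ENNReal.ofReal (2/α)) μ := by
      refine MemLp.of_bound ((Real.continuous_rpow_const hα0).comp_aestronglyMeasurable hgm) 1 ?_
      filter_upwards [hg1] with ω h1
      rw [Real.norm_eq_abs, abs_of_nonneg (Real.rpow_nonneg (hg0 ω) α)]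
      exact Real.rpow_le_one (hg0 ω) h1 hα0
    have hgmem : MemLp (fun _ : Ω => (1:ℝ)) (ENNReal.ofReal q) μ := memLp_const 1
    have hold := integral_mul_le_Lp_mul_Lq_of_nonneg hpq
      (ae_of_all μ fun ω => Real.rpow_nonneg (hg0 ω) α)
      (ae_of_all μ fun _ => zero_le_one) hfmem hgmem
    have hL : ∫ ω, g ω ^ α * (1:ℝ) ∂μ = ∫ ω, |X ω - Y ω| ^ α ∂μ := by
      simp [hgdef]
    have hpow : ∀ ω, (g ω ^ α) ^ (2/α) = g ω ^ (2:ℕ) := fun ω => by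
      rw [← Real.rpow_natCast (g ω) 2, ← Real.rpow_mul (hg0 ω)]
      congr 1
      field_simp
      norm_num
    have hone : ∫ ω, (1:ℝ) ^ q ∂μ = 1 := by
      simp [Real.one_rpow]
    rw [hL] at hold
    calc ∫ ω, |X ω - Y ω| ^ α ∂μ
        ≤ (∫ ω, (g ω ^ α) ^ (2/α) ∂μ) ^ (1/(2/α)) * (∫ ω, (1:ℝ) ^ q ∂μ) ^ (1/q) := hold
      _ = (∫ ω, g ω ^ (2:ℕ) ∂μ) ^ (α/2) := by
          rw [hone, Real.one_rpow, mul_one]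
          congr 1
          · exact integral_congr_ae (ae_of_all μ fun ω => hpow ω)
          · rw [one_div_div]
      _ ≤ ((1:ℝ)/4) ^ (α/2) := by
          refine Real.rpow_le_rpow ?_ hgsq (by linarith)
          exact integral_nonneg fun ω => pow_nonneg (hg0 ω) 2
      _ = (2:ℝ) ^ (-α) := rpow_neg_two_eq α

section Construction

lemma measurableSet_bool (s : Set Bool) : MeasurableSet s := MeasurableSet.of_discrete

noncomputable def muB : Measure Bool := (2⁻¹ : ENNReal) • (Measure.dirac true + Measure.dirac false)

instance : IsProbabilityMeasure muB := by
  constructor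
  simp [muB, Measure.smul_apply, Measure.add_apply]
  exact ENNReal.inv_two_add_inv_two

noncomputable def Zb : Bool → ℝ := ({true} : Set Bool).indicator (fun _ => (1:ℝ))

lemma muB_true : muB {true} = 2⁻¹ := by
  simp [muB, Measure.smul_apply, Measure.add_apply,
    Measure.dirac_apply' _ (measurableSet_bool {true})]

lemma Zb_int : ∫ ω, Zb ω ∂muB = 1/2 := by
  rw [show (fun ω => Zb ω) = Zb from rfl, Zb,
    integral_indicator_const (1:ℝ) (measurableSet_bool _), measureReal_def, muB_true]
  rw [ENNReal.toReal_inv]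
  norm_num

lemma coherent_example : IsCoherentPair muB (fun _ => (1/2 : ℝ)) Zb := by
  refine ⟨{true}, ⊥, inferInstance, measurableSet_bool _, bot_le, le_rfl, ?_, ?_⟩
  · rw [show ({true} : Set Bool).indicator (fun _ => (1:ℝ)) = Zb from rfl]
    rw [condExp_bot, Zb_int]
  · exact Filter.EventuallyEq.of_eq (condExp_of_stronglyMeasurable le_rfl
      (stronglyMeasurable_const.indicator (measurableSet_bool _))
      ((integrable_const (1:ℝ)).indicator (measurableSet_bool ({true} : Set Bool)))).symm

lemma indep_example : IndepFun (fun _ => (1/2 : ℝ)) Zb muB := by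
  rw [IndepFun_iff_Indep, MeasurableSpace.comap_const]
  exact indep_bot_left _

lemma value_example (α : ℝ) : ∫ ω, |(fun _ => (1/2:ℝ)) ω - Zb ω| ^ α ∂muB = (2:ℝ) ^ (-α) := by
  have habs : ∀ ω : Bool, |(1/2:ℝ) - Zb ω| = 1/2 := by
    intro ω
    cases ω <;> simp [Zb, Set.indicator_apply] <;> norm_num [abs_of_nonneg]
  have hfn : (fun ω : Bool => |(fun _ => (1/2:ℝ)) ω - Zb ω| ^ α) = fun _ => ((1/2:ℝ)) ^ α := by
    funext ω
    rw [show (fun _ => (1/2:ℝ)) ω = 1/2 from rfl, habs ω]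
  calc ∫ ω, |(fun _ => (1/2:ℝ)) ω - Zb ω| ^ α ∂muB
      = ∫ _ω : Bool, ((1/2:ℝ)) ^ α ∂muB := by rw [hfn]
    _ = ((1/2:ℝ)) ^ α := by rw [integral_const, probReal_univ]; simp
    _ = (2:ℝ) ^ (-α) := by
        rw [Real.rpow_neg (by norm_num : (0:ℝ) ≤ 2)]
        rw [show ((1:ℝ)/2) = 2⁻¹ by norm_num, Real.inv_rpow (by norm_num : (0:ℝ) ≤ 2)]

end Construction

/-- The set of values `E|X - Y|^α` over all coherent pairs `(X, Y)`. -/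
def coherentRPowVals (α : ℝ) : Set ℝ :=
  { r : ℝ | ∃ (Ω : Type) (m0 : MeasurableSpace Ω) (μ : Measure Ω),
      IsProbabilityMeasure μ ∧ ∃ X Y : Ω → ℝ,
        IsCoherentPair μ X Y ∧ r = ∫ ω, |X ω - Y ω| ^ α ∂μ }

/-- The set of values `E|X - Y|^α` over all coherent pairs `(X, Y)` with `X` and `Y`
independent. -/
def coherentIndepRPowVals (α : ℝ) : Set ℝ :=
  { r : ℝ | ∃ (Ω : Type) (m0 : MeasurableSpace Ω) (μ : Measure Ω),
      IsProbabilityMeasure μ ∧ ∃ X Y : Ω → ℝ,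
        IsCoherentPair μ X Y ∧ IndepFun X Y μ ∧ r = ∫ ω, |X ω - Y ω| ^ α ∂μ }

/-- For `0 ≤ α ≤ 2`, the supremum of `E|X - Y|^α` over all coherent pairs equals `2^{-α}`, the
same supremum restricted to independent coherent pairs also equals `2^{-α}`, and in particular
every coherent pair satisfies `E|X - Y|^α ≤ 2^{-α}`. -/
theorem sup_coherent_rpow_eq (α : ℝ) (hα0 : 0 ≤ α) (hα2 : α ≤ 2) :
    IsLUB (coherentRPowVals α) ((2 : ℝ) ^ (-α)) ∧
    IsLUB (coherentIndepRPowVals α) ((2 : ℝ) ^ (-α)) ∧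
    (∀ (Ω : Type) (m0 : MeasurableSpace Ω) (μ : Measure Ω), IsProbabilityMeasure μ →
      ∀ X Y : Ω → ℝ, IsCoherentPair μ X Y →
        ∫ ω, |X ω - Y ω| ^ α ∂μ ≤ (2 : ℝ) ^ (-α)) := by
  have part3 : ∀ (Ω : Type) (m0 : MeasurableSpace Ω) (μ : Measure Ω), IsProbabilityMeasure μ →
      ∀ X Y : Ω → ℝ, IsCoherentPair μ X Y →
        ∫ ω, |X ω - Y ω| ^ α ∂μ ≤ (2 : ℝ) ^ (-α) := by
    intro Ω m0 μ hP X Y hcoh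
    haveI := hP
    exact coherent_rpow_le μ X Y hcoh α hα0 hα2
  have hmem : (2:ℝ) ^ (-α) ∈ coherentIndepRPowVals α :=
    ⟨Bool, inferInstance, muB, inferInstance, (fun _ => (1/2:ℝ)), Zb,
      coherent_example, indep_example, (value_example α).symm⟩
  have hmem' : (2:ℝ) ^ (-α) ∈ coherentRPowVals α :=
    ⟨Bool, inferInstance, muB, inferInstance, (fun _ => (1/2:ℝ)), Zb,
      coherent_example, (value_example α).symm⟩
  refine ⟨IsGreatest.isLUB ⟨hmem', ?_⟩, IsGreatest.isLUB ⟨hmem, ?_⟩, part3⟩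
  · rintro r ⟨Ω, m0, μ, hP, X, Y, hcoh, rfl⟩
    exact part3 Ω m0 μ hP X Y hcoh
  · rintro r ⟨Ω, m0, μ, hP, X, Y, hcoh, _, rfl⟩
    exact part3 Ω m0 μ hP X Y hcoh
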